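/- If B is an invertible H-selfadjoint complex matrix with no eigenvalues on the negative real axis (−∞, 0], then for every positive integer m there exists an H-selfadjoint matrix A with A^m = B. -/

import Mathlib

open Matrix

def jordanBlock (n : ℕ) (lam : ℂ) : Matrix (Fin n) (Fin n) ℂ :=
  fun i j => if (i : ℕ) = (j : ℕ) then lam else if (i : ℕ) + 1 = (j : ℕ) then 1 else 0

def backQ (n : ℕ) : Matrix (Fin n) (Fin n) ℂ :=
  fun i j => if (i : ℕ) + (j : ℕ) + 1 = n then 1 else 0

def dsum {n : ℕ} (A B : Matrix (Fin n) (Fin n) ℂ) :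
    Matrix (Fin (n + n)) (Fin (n + n)) ℂ :=
  Matrix.reindex finSumFinEquiv finSumFinEquiv (Matrix.fromBlocks A 0 0 B)

section Auxiliary

open Polynomial

noncomputable section

lemma binom_aux {R : Type*} [CommRing R] (x y : R) :
    ∀ m : ℕ, ∃ s : R, (x + y) ^ m = x ^ m + m * x ^ (m - 1) * y + y ^ 2 * s := by
  intro m
  induction m with
  | zero => exact ⟨0, by simp⟩
  | succ m ih =>
    obtain ⟨s, hs⟩ := ih
    rcases Nat.eq_zero_or_pos m with hm | hm
    · subst hm; exact ⟨0, by ring⟩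
    · refine ⟨x * s + m * x ^ (m-1) + y * s, ?_⟩
      have hx : x ^ (m-1) * x = x ^ m := by
        rw [← pow_succ, Nat.sub_add_cancel hm]
      have h1 : (x + y) ^ (m+1) = (x + y) ^ m * (x + y) := pow_succ _ _
      rw [h1, hs]
      simp only [Nat.add_sub_cancel]
      push_cast
      linear_combination (↑m * y) * hx

lemma conj_eval (q : ℝ[X]) (z : ℂ) :
    (q.map (algebraMap ℝ ℂ)).eval ((starRingEnd ℂ) z) =
      (starRingEnd ℂ) ((q.map (algebraMap ℝ ℂ)).eval z) := by
  rw [eval_map, eval_map, hom_eval₂]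
  congr 1
  exact RingHom.ext fun r => (Complex.conj_ofReal r).symm

lemma real_eval (q : ℝ[X]) (r : ℝ) :
    (q.map (algebraMap ℝ ℂ)).eval ((r : ℝ) : ℂ) = ((q.eval r : ℝ) : ℂ) := by
  rw [eval_map]
  exact eval₂_at_apply (algebraMap ℝ ℂ) r

/-- base case: irreducible real polynomial with no root in `(-∞,0]` divides `p^m - X`. -/
lemma base_root (m : ℕ) (hm : 0 < m) (f : ℝ[X]) (hf : Irreducible f)
    (hroots : ∀ z : ℂ, (f.map (algebraMap ℝ ℂ)).eval z = 0 → ¬ ∃ x : ℝ, x ≤ 0 ∧ z = (x : ℂ)) :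
    ∃ p : ℝ[X], f ∣ p ^ m - X := by
  have hdeg : 0 < (f.map (algebraMap ℝ ℂ)).degree := by
    rw [degree_map]
    exact degree_pos_of_irreducible hf
  obtain ⟨z, hz⟩ := Complex.exists_root hdeg
  by_cases hzim : z.im = 0
  · -- real root case
    have hzre : z = ((z.re : ℝ) : ℂ) := (Complex.ext_iff).2 ⟨rfl, by simp [hzim]⟩
    set r : ℝ := z.re with hr
    have hrpos : 0 < r := by
      by_contra hneg
      exact hroots z hz ⟨r, le_of_not_gt hneg, hzre⟩
    have hfr : f.eval r = 0 := by
      have := real_eval f r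
      rw [← hzre] at this
      rw [hz] at this
      exact_mod_cast (Complex.ofReal_eq_zero).1 this.symm
    have hdvd1 : (X - C r) ∣ f := dvd_iff_isRoot.2 hfr
    obtain ⟨g, hg⟩ := hdvd1
    have hgu : IsUnit g := by
      rcases hf.isUnit_or_isUnit hg with h | h
      · exact absurd h (not_isUnit_X_sub_C r)
      · exact h
    have hfd : f ∣ (X - C r) := by
      obtain ⟨u, hu⟩ := hgu
      exact ⟨(↑u⁻¹ : ℝ[X]ˣ), by rw [hg, ← hu, mul_assoc, Units.mul_inv, mul_one]⟩
    refine ⟨C (r ^ (m : ℝ)⁻¹), dvd_trans hfd (dvd_iff_isRoot.2 ?_)⟩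
    simp only [IsRoot, eval_sub, eval_pow, eval_C, eval_X]
    rw [← Real.rpow_natCast (r ^ (m : ℝ)⁻¹) m, ← Real.rpow_mul hrpos.le,
      inv_mul_cancel₀ (by exact_mod_cast hm.ne' : (m : ℝ) ≠ 0), Real.rpow_one, sub_self]
  · -- complex root case
    obtain ⟨w, hw⟩ := IsAlgClosed.exists_pow_nat_eq z hm
    set a : ℝ := w.im / z.im with ha
    set b : ℝ := w.re - a * z.re with hb
    set p : ℝ[X] := C a * X + C b with hp
    have hpz : (p.map (algebraMap ℝ ℂ)).eval z = w := by
      simp only [hp, Polynomial.map_add, Polynomial.map_mul, map_C, map_X, eval_add, eval_mul,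
        eval_C, eval_X]
      apply Complex.ext
      · simp only [Complex.coe_algebraMap, Complex.add_re, Complex.mul_re, Complex.ofReal_re,
          Complex.ofReal_im]
        rw [hb, ha]; ring
      · simp only [Complex.coe_algebraMap, Complex.add_im, Complex.mul_im, Complex.ofReal_re,
          Complex.ofReal_im]
        rw [ha]; field_simp; ring
    have hroot1 : (X - C z) ∣ ((p ^ m - X).map (algebraMap ℝ ℂ)) := by
      refine dvd_iff_isRoot.2 ?_
      simp only [IsRoot, Polynomial.map_sub, Polynomial.map_pow, map_X, eval_sub, eval_pow]
      rw [hpz, hw, eval_X, sub_self]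
    have hroot1' : (X - C z) ∣ (f.map (algebraMap ℝ ℂ)) := dvd_iff_isRoot.2 hz
    have hconj : ∀ q : ℝ[X], (q.map (algebraMap ℝ ℂ)).eval z = 0 →
        (X - C ((starRingEnd ℂ) z)) ∣ (q.map (algebraMap ℝ ℂ)) := by
      intro q hq
      refine dvd_iff_isRoot.2 ?_
      rw [IsRoot, conj_eval, hq, map_zero]
    have hcop : IsCoprime (X - C z) (X - C ((starRingEnd ℂ) z)) := by
      apply isCoprime_X_sub_C_of_isUnit_sub
      refine (sub_ne_zero.2 fun h => ?_).isUnit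
      exact hzim (Complex.conj_eq_iff_im.1 h.symm)
    have hQdvd : ∀ q : ℝ[X], (q.map (algebraMap ℝ ℂ)).eval z = 0 →
        ((X - C z) * (X - C ((starRingEnd ℂ) z))) ∣ (q.map (algebraMap ℝ ℂ)) := by
      intro q hq
      exact hcop.mul_dvd (dvd_iff_isRoot.2 hq) (hconj q hq)
    -- Q as real polynomial
    set Q : ℝ[X] := X ^ 2 - C (2 * z.re) * X + C (Complex.normSq z) with hQ
    have hQmap : Q.map (algebraMap ℝ ℂ) = (X - C z) * (X - C ((starRingEnd ℂ) z)) := by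
      simp only [hQ, Polynomial.map_add, Polynomial.map_sub, Polynomial.map_pow,
        Polynomial.map_mul, map_C, map_X]
      have h1 : (algebraMap ℝ ℂ) (2 * z.re) = z + (starRingEnd ℂ) z := by
        rw [Complex.coe_algebraMap, Complex.add_conj]
      have h2 : (algebraMap ℝ ℂ) (Complex.normSq z) = z * (starRingEnd ℂ) z := by
        rw [Complex.coe_algebraMap]; exact (Complex.mul_conj z).symm
      rw [h1, h2]; simp only [C_add, C_mul]; ring
    have hQf : Q ∣ f := by
      rw [← map_dvd_map' (algebraMap ℝ ℂ), hQmap]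
      exact hQdvd f hz
    have hQp : Q ∣ p ^ m - X := by
      rw [← map_dvd_map' (algebraMap ℝ ℂ), hQmap]
      refine hcop.mul_dvd hroot1 (hconj _ ?_)
      simp only [Polynomial.map_sub, Polynomial.map_pow, map_X, eval_sub, eval_pow]
      rw [hpz, hw, eval_X, sub_self]
    obtain ⟨g, hg⟩ := hQf
    have hQnu : ¬ IsUnit Q := by
      intro h
      have : IsUnit (Q.map (algebraMap ℝ ℂ)) := h.map (mapRingHom (algebraMap ℝ ℂ))
      rw [hQmap] at this
      exact not_isUnit_X_sub_C z (isUnit_of_mul_isUnit_left this)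
    have hgu : IsUnit g := (hf.isUnit_or_isUnit hg).resolve_left hQnu
    have hfQ : f ∣ Q := by
      obtain ⟨u, hu⟩ := hgu
      exact ⟨(↑u⁻¹ : ℝ[X]ˣ), by rw [hg, ← hu, mul_assoc, Units.mul_inv, mul_one]⟩
    exact ⟨p, dvd_trans hfQ hQp⟩

lemma primepow_root (m : ℕ) (hm : 0 < m) (f : ℝ[X]) (hf : Prime f)
    (hroots : ∀ z : ℂ, (f.map (algebraMap ℝ ℂ)).eval z = 0 → ¬ ∃ x : ℝ, x ≤ 0 ∧ z = (x : ℂ)) :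
    ∀ k : ℕ, ∃ p : ℝ[X], f ^ k ∣ p ^ m - X := by
  intro k
  induction k with
  | zero => exact ⟨0, by simpa using one_dvd _⟩
  | succ k ih =>
    rcases Nat.eq_zero_or_pos k with hk | hk
    · subst hk
      obtain ⟨p, hp⟩ := base_root m hm f hf.irreducible hroots
      exact ⟨p, by simpa using hp⟩
    · obtain ⟨p, hp⟩ := ih
      obtain ⟨w, hwit⟩ := hp
      -- f does not divide p
      have hfp : ¬ f ∣ p := by
        intro hdvd
        have h1 : f ∣ X := by
          have h2 : f ∣ p ^ m := dvd_pow hdvd hm.ne'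
          have h3 : f ∣ p ^ m - X := hwit ▸ dvd_mul_of_dvd_left (dvd_pow_self f hk.ne') w
          have h4 : f ∣ p ^ m - (p ^ m - X) := dvd_sub h2 h3
          simpa using h4
        obtain ⟨c, hc⟩ := h1
        have heval : f.eval 0 * c.eval 0 = 0 := by
          have := congrArg (Polynomial.eval (0 : ℝ)) hc
          simpa [eval_mul] using this.symm
        rcases mul_eq_zero.1 heval with h0 | h0
        · refine hroots 0 ?_ ⟨0, le_refl 0, by norm_num⟩
          have := real_eval f 0
          rw [h0] at this
          simpa using this
        · have hXc : X ∣ c := by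
            have := dvd_iff_isRoot.2 (show c.IsRoot 0 from h0)
            simpa using this
          obtain ⟨d, hd⟩ := hXc
          rw [hd] at hc
          have : (1 : ℝ[X]) = f * d := by
            have hX : (X : ℝ[X]) ≠ 0 := X_ne_zero
            apply mul_left_cancel₀ hX
            linear_combination hc
          exact hf.not_isUnit (IsUnit.of_mul_eq_one d this.symm)
      have hfm : ¬ f ∣ ((m : ℝ[X]) * p ^ (m - 1)) := by
        intro hd
        rcases hf.2.2 _ _ hd with h | h
        · have hmu : IsUnit ((m : ℝ[X])) := by
            rw [← Polynomial.C_eq_natCast]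
            exact isUnit_C.2 (IsUnit.mk0 _ (by exact_mod_cast hm.ne'))
          exact hf.not_isUnit (isUnit_of_dvd_unit h hmu)
        · exact hfp (hf.dvd_of_dvd_pow h)
      have hcop : IsCoprime f ((m : ℝ[X]) * p ^ (m - 1)) := hf.coprime_iff_not_dvd.2 hfm
      obtain ⟨a, b, hab⟩ := hcop
      obtain ⟨j, rfl⟩ : ∃ j, k = j + 1 := ⟨k - 1, (Nat.succ_pred_eq_of_pos hk).symm⟩
      set c : ℝ[X] := -(b * w) with hcdef
      obtain ⟨s, hs⟩ := binom_aux p (f ^ (j + 1) * c) m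
      refine ⟨p + f ^ (j + 1) * c, w * a + f ^ j * (c ^ 2 * s), ?_⟩
      linear_combination hs + hwit - (f ^ (j + 1) * w) * hab

lemma key_root (m : ℕ) (hm : 0 < m) : ∀ μ : ℝ[X],
    (∀ z : ℂ, (μ.map (algebraMap ℝ ℂ)).eval z = 0 → ¬ ∃ x : ℝ, x ≤ 0 ∧ z = (x : ℂ)) →
    ∃ p : ℝ[X], μ ∣ p ^ m - X := by
  intro μ
  induction μ using UniqueFactorizationMonoid.induction_on_coprime with
  | h0 =>
    intro hroots
    exact absurd ⟨0, le_refl 0, by norm_num⟩ (hroots 0 (by simp))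
  | @h1 x hx =>
    intro _
    exact ⟨0, hx.dvd⟩
  | @hpr p i hp =>
    intro hroots
    rcases Nat.eq_zero_or_pos i with hi | hi
    · subst hi; exact ⟨0, by simpa using one_dvd _⟩
    · exact primepow_root m hm _ hp (fun z hz => hroots z (by
        rw [Polynomial.map_pow, eval_pow, hz, zero_pow hi.ne'])) i
  | @hcp x y hrel hx hy =>
    intro hroots
    obtain ⟨px, hpx⟩ := hx (fun z hz => hroots z (by rw [Polynomial.map_mul, eval_mul, hz, zero_mul]))
    obtain ⟨py, hpy⟩ := hy (fun z hz => hroots z (by rw [Polynomial.map_mul, eval_mul, hz, mul_zero]))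
    have hcop : IsCoprime x y := hrel.isCoprime
    obtain ⟨u, v, huv⟩ := id hcop
    set p : ℝ[X] := px * v * y + py * u * x with hpdef
    have h1 : x ∣ p - px := ⟨u * (py - px), by linear_combination (px) * huv⟩
    have h2 : y ∣ p - py := ⟨v * (px - py), by linear_combination (py) * huv⟩
    refine ⟨p, hcop.mul_dvd ?_ ?_⟩
    · have hx1 : x ∣ p ^ m - px ^ m := dvd_trans h1 (sub_dvd_pow_sub_pow p px m)
      have := dvd_add hx1 hpx
      simpa using this
    · have hy1 : y ∣ p ^ m - py ^ m := dvd_trans h2 (sub_dvd_pow_sub_pow p py m)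
      have := dvd_add hy1 hpy
      simpa using this

end

end Auxiliary

open Polynomial

theorem exists_H_selfadjoint_root_no_nonpositive_spectrum {n : ℕ} (m : ℕ)
    (hm : 0 < m) (H B : Matrix (Fin n) (Fin n) ℂ)
    (hH : H.IsHermitian) (hHinv : IsUnit H) (hBinv : IsUnit B)
    (hsa : H * B = Bᴴ * H)
    (hspec : ∀ z ∈ spectrum ℂ B, ¬ ∃ x : ℝ, x ≤ 0 ∧ z = (x : ℂ)) :
    ∃ A : Matrix (Fin n) (Fin n) ℂ, H * A = Aᴴ * H ∧ A ^ m = B := by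
  classical
  have hint : IsIntegral ℝ B := Algebra.IsIntegral.isIntegral B
  have hroots : ∀ z : ℂ, ((minpoly ℝ B).map (algebraMap ℝ ℂ)).eval z = 0 →
      ¬ ∃ x : ℝ, x ≤ 0 ∧ z = (x : ℂ) := by
    rintro z hz ⟨x, hx, rfl⟩
    have h1 : (algebraMap ℝ ℂ) ((minpoly ℝ B).eval x) = 0 := by
      rw [← eval₂_at_apply (algebraMap ℝ ℂ) x, ← eval_map]
      exact hz
    have hevx : (minpoly ℝ B).eval x = 0 :=
      (RingHom.injective (algebraMap ℝ ℂ)) (h1.trans (map_zero _).symm)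
    have hxspec : ((x : ℝ) : ℂ) ∉ spectrum ℂ B := fun hmem => hspec _ hmem ⟨x, hx, rfl⟩
    have hunit : IsUnit (algebraMap ℂ (Matrix (Fin n) (Fin n) ℂ) ((x : ℝ) : ℂ) - B) :=
      spectrum.notMem_iff.1 hxspec
    obtain ⟨g, hg⟩ := dvd_iff_isRoot.2 hevx
    have hg0 : g ≠ 0 := fun h => minpoly.ne_zero hint (by rw [hg, h, mul_zero])
    have haev : aeval B (minpoly ℝ B) = 0 := minpoly.aeval ℝ B
    have haevg : aeval B g = 0 := by
      have h2 : aeval B (X - C x) * aeval B g = 0 := by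
        rw [← _root_.map_mul, ← hg, haev]
      have h3 : aeval B (X - C x) =
          -(algebraMap ℂ (Matrix (Fin n) (Fin n) ℂ) ((x : ℝ) : ℂ) - B) := by
        have h4 : (algebraMap ℝ (Matrix (Fin n) (Fin n) ℂ)) x =
            algebraMap ℂ (Matrix (Fin n) (Fin n) ℂ) ((x : ℝ) : ℂ) :=
          IsScalarTower.algebraMap_apply ℝ ℂ _ x
        rw [map_sub, aeval_X, aeval_C, h4]
        exact (neg_sub _ _).symm
      rw [h3] at h2
      obtain ⟨u, hu⟩ := hunit.neg
      rw [← hu] at h2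
      calc aeval B g = ↑u⁻¹ * (↑u * aeval B g) := by rw [← mul_assoc, Units.inv_mul, one_mul]
      _ = 0 := by rw [h2, mul_zero]
    have hmin := minpoly.degree_le_of_ne_zero ℝ B hg0 haevg
    have hdeg : (minpoly ℝ B).degree = 1 + g.degree := by
      rw [hg, degree_mul, degree_X_sub_C]
    have hl : g.degree = (g.natDegree : WithBot ℕ) := degree_eq_natDegree hg0
    rw [hdeg, hl] at hmin
    exact absurd hmin (by exact_mod_cast by omega)
  obtain ⟨p, c, hc⟩ := key_root m hm (minpoly ℝ B) hroots
  refine ⟨aeval B p, ?_, ?_⟩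
  · -- selfadjointness
    have hpowsa : ∀ i : ℕ, H * B ^ i = (B ^ i)ᴴ * H := by
      intro i
      induction i with
      | zero => simp
      | succ i ih =>
        calc H * B ^ (i+1) = (H * B) * B ^ i := by rw [pow_succ', ← mul_assoc]
        _ = Bᴴ * (H * B ^ i) := by rw [hsa, mul_assoc]
        _ = Bᴴ * ((B ^ i)ᴴ * H) := by rw [ih]
        _ = (B ^ i * B)ᴴ * H := by rw [conjTranspose_mul, mul_assoc]
        _ = (B ^ (i+1))ᴴ * H := by rw [← pow_succ]
    have hsmul : ∀ (r : ℝ) (M : Matrix (Fin n) (Fin n) ℂ), (r • M)ᴴ = r • Mᴴ := by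
      intro r M
      ext i j
      simp [conjTranspose_apply, star_smul]
    rw [aeval_eq_sum_range, Finset.mul_sum, conjTranspose_sum, Finset.sum_mul]
    refine Finset.sum_congr rfl fun i _ => ?_
    rw [hsmul, mul_smul_comm, smul_mul_assoc, hpowsa i]
  · -- m-th power
    have h1 : aeval B (p ^ m - X) = aeval B (minpoly ℝ B) * aeval B c := by
      rw [← _root_.map_mul, ← hc]
    rw [minpoly.aeval, zero_mul] at h1
    have h2 : aeval B (p ^ m - X) = (aeval B p) ^ m - B := by rw [map_sub, map_pow, aeval_X]
    rw [h2] at h1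
    exact sub_eq_zero.1 h1
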